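/- Let S ⊂ ℝ^n be nonempty and compact, and let V : ℝ^n → [0,∞) be continuous and radially unbounded (V(x) → ∞ as |x| → ∞) with V(x) = 0 if and only if x ∈ S. Then there exist class-K∞ functions ψ₁ and ψ₂ such that ψ₁(dist(x,S)) ≤ V(x) ≤ ψ₂(dist(x,S)) for all x ∈ ℝ^n. (claim established in the proof of Proposition 4) -/

import Mathlib

open Filter Set intervalIntegral MeasureTheory

private lemma avg_intble {h : ℝ → ℝ} (hh : Monotone h) {r : ℝ} (hr : 0 ≤ r) (c d : ℝ) :
    IntervalIntegrable (fun s => h (r * s)) volume c d :=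
  (hh.comp (monotone_mul_left_of_nonneg hr)).intervalIntegrable

private lemma avg_le {h : ℝ → ℝ} (hh : Monotone h) {c d r : ℝ} (hcd : c ≤ d) (hr : 0 ≤ r) :
    (∫ s in c..d, h (r * s)) ≤ (d - c) * h (r * d) := by
  calc (∫ s in c..d, h (r * s)) ≤ ∫ _s in c..d, h (r * d) := by
        apply integral_mono_on hcd (avg_intble hh hr c d) (intervalIntegrable_const)
        exact fun x hx => hh (mul_le_mul_of_nonneg_left hx.2 hr)
    _ = (d - c) * h (r * d) := by simp [intervalIntegral.integral_const, smul_eq_mul]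

private lemma le_avg {h : ℝ → ℝ} (hh : Monotone h) {c d r : ℝ} (hcd : c ≤ d) (hr : 0 ≤ r) :
    (d - c) * h (r * c) ≤ ∫ s in c..d, h (r * s) := by
  calc (d - c) * h (r * c) = ∫ _s in c..d, h (r * c) := by
        simp [intervalIntegral.integral_const, smul_eq_mul]
    _ ≤ ∫ s in c..d, h (r * s) := by
        apply integral_mono_on hcd (intervalIntegrable_const) (avg_intble hh hr c d)
        exact fun x hx => hh (mul_le_mul_of_nonneg_left hx.1 hr)

private lemma avg_mono {h : ℝ → ℝ} (hh : Monotone h) {c d : ℝ} (hc : 0 ≤ c) (hcd : c ≤ d)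
    {r₁ r₂ : ℝ} (h1 : 0 ≤ r₁) (h12 : r₁ ≤ r₂) :
    (∫ s in c..d, h (r₁ * s)) ≤ ∫ s in c..d, h (r₂ * s) := by
  apply integral_mono_on hcd (avg_intble hh h1 c d) (avg_intble hh (h1.trans h12) c d)
  exact fun x hx => hh (mul_le_mul_of_nonneg_right h12 (hc.trans hx.1))

private lemma avg_contAt {h : ℝ → ℝ} (hh : Monotone h) (c d : ℝ) {r : ℝ} (hr : 0 < r) :
    ContinuousAt (fun t => ∫ s in c..d, h (t * s)) r := by
  set F : ℝ → ℝ := fun t => ∫ u in (0:ℝ)..t, h u with hF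
  have hFc : Continuous F :=
    intervalIntegral.continuous_primitive (fun a b => hh.intervalIntegrable) 0
  have key : ∀ t : ℝ, t ≠ 0 → (∫ s in c..d, h (t * s)) = t⁻¹ * (F (t * d) - F (t * c)) := by
    intro t ht
    rw [intervalIntegral.integral_comp_mul_left (fun u => h u) ht, smul_eq_mul]
    congr 1
    have h1 : IntervalIntegrable h volume 0 (t * c) := hh.intervalIntegrable
    have h2 : IntervalIntegrable h volume (t * c) (t * d) := hh.intervalIntegrable
    have := integral_add_adjacent_intervals h1 h2
    simp only [hF]
    linarith
  have hc2 : ContinuousAt (fun t => t⁻¹ * (F (t * d) - F (t * c))) r := by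
    apply ContinuousAt.mul (continuousAt_inv₀ hr.ne')
    exact ((hFc.comp (continuous_mul_right d)).sub (hFc.comp (continuous_mul_right c))).continuousAt
  apply hc2.congr
  filter_upwards [isOpen_compl_singleton.mem_nhds
    (show r ∈ ({0}ᶜ : Set ℝ) by simpa using hr.ne')] with t ht
  exact (key t ht).symm

/-- Claim from the proof of **Proposition 4**: a continuous, nonnegative, radially unbounded
function `V` vanishing exactly on a nonempty compact set `S` is sandwiched between two
class-`K∞` functions of the distance to `S`. -/
theorem exists_Kinfty_sandwich
    {n : ℕ} (S : Set (EuclideanSpace ℝ (Fin n)))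
    (hSne : S.Nonempty) (hScomp : IsCompact S)
    (V : EuclideanSpace ℝ (Fin n) → ℝ)
    (hVcont : Continuous V)
    (hVnonneg : ∀ x, 0 ≤ V x)
    (hVrad : Tendsto V (Bornology.cobounded (EuclideanSpace ℝ (Fin n))) atTop)
    (hVzero : ∀ x, V x = 0 ↔ x ∈ S) :
    ∃ ψ₁ ψ₂ : ℝ → ℝ,
      (ContinuousOn ψ₁ (Ici 0) ∧ StrictMonoOn ψ₁ (Ici 0) ∧ ψ₁ 0 = 0 ∧
        Tendsto ψ₁ atTop atTop) ∧
      (ContinuousOn ψ₂ (Ici 0) ∧ StrictMonoOn ψ₂ (Ici 0) ∧ ψ₂ 0 = 0 ∧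
        Tendsto ψ₂ atTop atTop) ∧
      ∀ x, ψ₁ (Metric.infDist x S) ≤ V x ∧ V x ≤ ψ₂ (Metric.infDist x S) := by
  obtain ⟨s₀, hs₀⟩ := hSne
  -- points far away have large V
  have hfar : ∀ M : ℝ, ∃ R : ℝ, ∀ x : EuclideanSpace ℝ (Fin n), R < ‖x‖ → M ≤ V x := by
    intro M
    have h1 : ∀ᶠ x in Bornology.cobounded (EuclideanSpace ℝ (Fin n)), M ≤ V x :=
      hVrad.eventually (eventually_ge_atTop M)
    rw [(Metric.hasBasis_cobounded_compl_closedBall (0 : EuclideanSpace ℝ (Fin n))).eventually_iff] at h1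
    obtain ⟨R, -, hR⟩ := h1
    refine ⟨R, fun x hx => hR ?_⟩
    simp only [mem_compl_iff, Metric.mem_closedBall, dist_zero_right]
    exact not_le.2 hx
  -- the lower envelope `a`
  set A : ℝ → Set (EuclideanSpace ℝ (Fin n)) := fun r => {x : EuclideanSpace ℝ (Fin n) | r ≤ Metric.infDist x S} with hA
  set a : ℝ → ℝ := fun r => sInf (insert (1 + r) (V '' A r)) with ha
  have haBdd : ∀ r : ℝ, BddBelow (insert (1 + r) (V '' A r)) := by
    intro r
    refine ⟨min 0 (1 + r), ?_⟩
    rintro y (rfl | ⟨x, -, rfl⟩)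
    · exact min_le_right _ _
    · exact le_trans (min_le_left _ _) (hVnonneg x)
  have ha_le : ∀ (r : ℝ) (x : EuclideanSpace ℝ (Fin n)), r ≤ Metric.infDist x S → a r ≤ V x := by
    intro r x hx
    exact csInf_le (haBdd r) (mem_insert_of_mem _ ⟨x, hx, rfl⟩)
  have ha_le' : ∀ r : ℝ, a r ≤ 1 + r := fun r => csInf_le (haBdd r) (mem_insert _ _)
  have ha_mono : Monotone a := by
    intro r₁ r₂ h12
    apply le_csInf (insert_nonempty _ _)
    rintro y (rfl | ⟨x, hx, rfl⟩)
    · exact (ha_le' r₁).trans (by linarith)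
    · exact ha_le r₁ x (le_trans h12 hx)
  have ha_nonneg : ∀ r : ℝ, 0 ≤ r → 0 ≤ a r := by
    intro r hr
    apply le_csInf (insert_nonempty _ _)
    rintro y (rfl | ⟨x, -, rfl⟩)
    · linarith
    · exact hVnonneg x
  have ha_pos : ∀ r : ℝ, 0 < r → 0 < a r := by
    intro r hr
    obtain ⟨R, hR⟩ := hfar 1
    set K : Set (EuclideanSpace ℝ (Fin n)) := A r ∩ Metric.closedBall 0 R with hK
    have hKc : IsCompact K := by
      exact (isCompact_closedBall (0 : EuclideanSpace ℝ (Fin n)) R).inter_left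
        (isClosed_le continuous_const (Metric.continuous_infDist_pt S))
    have hKpos : ∀ x ∈ K, 0 < V x := by
      intro x hx
      rcases (hVnonneg x).lt_or_eq with h | h
      · exact h
      · exfalso
        have hxS : x ∈ S := (hVzero x).1 h.symm
        have : Metric.infDist x S = 0 := Metric.infDist_zero_of_mem hxS
        have := hx.1
        simp only [hA, mem_setOf_eq] at this
        linarith
    obtain ⟨ε, hε, hεle⟩ : ∃ ε : ℝ, 0 < ε ∧ ∀ y ∈ insert (1 + r) (V '' A r), ε ≤ y := by
      rcases eq_empty_or_nonempty K with hKe | hKne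
      · refine ⟨min 1 (1 + r), by positivity, ?_⟩
        rintro y (rfl | ⟨x, hx, rfl⟩)
        · exact min_le_right _ _
        · rcases le_or_gt ‖x‖ R with hxR | hxR
          · exact absurd (show x ∈ K from ⟨hx, by simpa [Metric.mem_closedBall, dist_zero_right] using hxR⟩)
              (by simp [hKe])
          · exact le_trans (min_le_left _ _) (hR x hxR)
      · obtain ⟨x₀, hx₀K, hx₀min⟩ := hKc.exists_isMinOn hKne hVcont.continuousOn
        refine ⟨min (min 1 (1 + r)) (V x₀), ?_, ?_⟩
        · exact lt_min (by positivity) (hKpos x₀ hx₀K)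
        · rintro y (rfl | ⟨x, hx, rfl⟩)
          · exact le_trans (min_le_left _ _) (min_le_right _ _)
          · rcases le_or_gt ‖x‖ R with hxR | hxR
            · exact le_trans (min_le_right _ _)
                (hx₀min ⟨hx, by simpa [Metric.mem_closedBall, dist_zero_right] using hxR⟩)
            · exact le_trans (min_le_left _ _) (le_trans (min_le_left _ _) (hR x hxR))
    exact lt_of_lt_of_le hε (le_csInf (insert_nonempty _ _) hεle)
  have ha_tendsto : Tendsto a atTop atTop := by
    rw [tendsto_atTop]
    intro M
    obtain ⟨R, hR⟩ := hfar M
    filter_upwards [eventually_ge_atTop (max M (R + ‖s₀‖ + 1))] with r hr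
    apply le_csInf (insert_nonempty _ _)
    rintro y (rfl | ⟨x, hx, rfl⟩)
    · have := le_trans (le_max_left M _) hr; linarith
    · apply hR
      have h1 : Metric.infDist x S ≤ dist x s₀ := Metric.infDist_le_dist_of_mem hs₀
      have h2 : dist x s₀ ≤ ‖x‖ + ‖s₀‖ := by
        calc dist x s₀ ≤ dist x 0 + dist 0 s₀ := dist_triangle _ _ _
          _ = ‖x‖ + ‖s₀‖ := by rw [dist_zero_right, dist_comm, dist_zero_right]
      have hx' : r ≤ Metric.infDist x S := hx
      have := le_trans (le_max_right M _) hr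
      linarith
  -- truncated lower envelope
  set abar : ℝ → ℝ := fun r => min (a r) r with habar
  have habar_mono : Monotone abar := ha_mono.min monotone_id
  -- the upper envelope `b`
  set b : ℝ → ℝ := fun r => sSup (V '' Metric.cthickening r S) with hb
  have hbBdd : ∀ r : ℝ, BddAbove (V '' Metric.cthickening r S) := fun r =>
    (hScomp.cthickening).bddAbove_image hVcont.continuousOn
  have hbNe : ∀ r : ℝ, (V '' Metric.cthickening r S).Nonempty := fun r =>
    (Set.Nonempty.mono (Metric.self_subset_cthickening S) ⟨s₀, hs₀⟩).image V
  have hb_mono : Monotone b := by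
    intro r₁ r₂ h12
    exact csSup_le_csSup (hbBdd r₂) (hbNe r₁) (image_mono (f := V) (Metric.cthickening_mono h12 S))
  have hb_ge : ∀ (r : ℝ) (x : EuclideanSpace ℝ (Fin n)), x ∈ Metric.cthickening r S → V x ≤ b r := by
    intro r x hx
    exact le_csSup (hbBdd r) ⟨x, hx, rfl⟩
  have hb_nonneg : ∀ r : ℝ, 0 ≤ b r := by
    intro r
    have : V s₀ ≤ b r := hb_ge r s₀ (Metric.self_subset_cthickening S hs₀)
    exact le_trans (hVnonneg s₀) this
  have hb_zero : b 0 = 0 := by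
    apply le_antisymm _ (hb_nonneg 0)
    apply csSup_le (hbNe 0)
    rintro y ⟨x, hx, rfl⟩
    rw [Metric.cthickening_zero, hScomp.isClosed.closure_eq] at hx
    exact le_of_eq ((hVzero x).2 hx)
  have hb_small : ∀ ε : ℝ, 0 < ε → ∃ δ : ℝ, 0 < δ ∧ b δ ≤ ε := by
    intro ε hε
    have hU : IsOpen (V ⁻¹' Iio ε) := isOpen_Iio.preimage hVcont
    have hSU : S ⊆ V ⁻¹' Iio ε := fun x hx => by
      simp only [mem_preimage, mem_Iio]; rw [(hVzero x).2 hx]; exact hε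
    obtain ⟨δ, hδ, hδsub⟩ := hScomp.exists_thickening_subset_open hU hSU
    refine ⟨δ / 2, by positivity, ?_⟩
    apply csSup_le (hbNe _)
    rintro y ⟨x, hx, rfl⟩
    have : x ∈ Metric.thickening δ S :=
      Metric.cthickening_subset_thickening' hδ (by linarith) S hx
    exact le_of_lt (hδsub this)
  have hVle_b : ∀ x : EuclideanSpace ℝ (Fin n), V x ≤ b (Metric.infDist x S) := by
    intro x
    apply hb_ge
    rw [Metric.mem_cthickening_iff]
    rw [show Metric.infDist x S = (Metric.infEDist x S).toReal from rfl,
      ENNReal.ofReal_toReal (Metric.infEdist_ne_top ⟨s₀, hs₀⟩)]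
  -- the two averaged functions
  set g₁ : ℝ → ℝ := fun r => 2 * ∫ s in (1/2 : ℝ)..1, abar (r * s) with hg₁
  set g₂ : ℝ → ℝ := fun r => ∫ s in (1 : ℝ)..2, b (r * s) with hg₂
  set cf : ℝ → ℝ := fun r => 1 - 1 / (2 + 2 * r) with hcf
  have hcf_bounds : ∀ r : ℝ, 0 ≤ r → 1/2 ≤ cf r ∧ cf r ≤ 1 := by
    intro r hr
    have h1 : (0:ℝ) < 2 + 2 * r := by linarith
    constructor
    · have : 1 / (2 + 2 * r) ≤ 1/2 := by
        apply div_le_div_of_nonneg_left (by norm_num) (by norm_num) (by linarith)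
      simp only [hcf]; linarith
    · have : 0 < 1 / (2 + 2 * r) := by positivity
      simp only [hcf]; linarith
  have hcf_strict : StrictMonoOn cf (Ici 0) := by
    intro r₁ h₁ r₂ h₂ h12
    simp only [hcf, sub_lt_sub_iff_left]
    apply one_div_lt_one_div_of_lt (by simp at h₁; linarith)
    simp at h₁ h₂; linarith
  -- bounds for g₁
  have hg₁_le : ∀ r : ℝ, 0 ≤ r → g₁ r ≤ abar r := by
    intro r hr
    have := avg_le habar_mono (show (1/2:ℝ) ≤ 1 by norm_num) hr
    simp only [hg₁, mul_one] at *
    linarith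
  have hg₁_ge : ∀ r : ℝ, 0 ≤ r → abar (r / 2) ≤ g₁ r := by
    intro r hr
    have := le_avg habar_mono (show (1/2:ℝ) ≤ 1 by norm_num) hr
    have heq : r * (1/2) = r / 2 := by ring
    rw [heq] at this
    simp only [hg₁]
    linarith
  have habar_nonneg : ∀ r : ℝ, 0 ≤ r → 0 ≤ abar r := fun r hr =>
    le_min (ha_nonneg r hr) hr
  have hg₁_nonneg : ∀ r : ℝ, 0 ≤ r → 0 ≤ g₁ r := fun r hr =>
    le_trans (habar_nonneg _ (by linarith)) (hg₁_ge r hr)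
  have hg₁_mono : ∀ r₁ r₂ : ℝ, 0 ≤ r₁ → r₁ ≤ r₂ → g₁ r₁ ≤ g₁ r₂ := by
    intro r₁ r₂ h1 h12
    have := avg_mono habar_mono (show (0:ℝ) ≤ 1/2 by norm_num)
      (show (1/2:ℝ) ≤ 1 by norm_num) h1 h12
    simp only [hg₁]
    linarith
  have hg₁_pos : ∀ r : ℝ, 0 < r → 0 < g₁ r := by
    intro r hr
    refine lt_of_lt_of_le ?_ (hg₁_ge r hr.le)
    exact lt_min (ha_pos _ (by linarith)) (by linarith)
  -- bounds for g₂
  have hg₂_ge : ∀ r : ℝ, 0 ≤ r → b r ≤ g₂ r := by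
    intro r hr
    have := le_avg hb_mono (show (1:ℝ) ≤ 2 by norm_num) hr
    simp only [mul_one] at this
    simp only [hg₂]
    linarith
  have hg₂_le : ∀ r : ℝ, 0 ≤ r → g₂ r ≤ b (2 * r) := by
    intro r hr
    have := avg_le hb_mono (show (1:ℝ) ≤ 2 by norm_num) hr
    rw [show r * 2 = 2 * r by ring] at this
    simp only [hg₂]
    linarith
  have hg₂_nonneg : ∀ r : ℝ, 0 ≤ r → 0 ≤ g₂ r := fun r hr =>
    le_trans (hb_nonneg r) (hg₂_ge r hr)
  have hg₂_mono : ∀ r₁ r₂ : ℝ, 0 ≤ r₁ → r₁ ≤ r₂ → g₂ r₁ ≤ g₂ r₂ := by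
    intro r₁ r₂ h1 h12
    exact avg_mono hb_mono (by norm_num) (by norm_num) h1 h12
  have hg₂_zero : g₂ 0 = 0 := by
    simp only [hg₂, zero_mul, intervalIntegral.integral_const, smul_eq_mul]
    rw [hb_zero]; ring
  have hg₁_zero : g₁ 0 = 0 := by
    have h1 : abar 0 = 0 := le_antisymm (min_le_right _ _) (habar_nonneg 0 le_rfl)
    simp only [hg₁, zero_mul, intervalIntegral.integral_const, smul_eq_mul, h1]
    ring
  -- the two comparison functions
  refine ⟨fun r => cf r * g₁ r, fun r => r + g₂ r, ⟨?_, ?_, ?_, ?_⟩, ⟨?_, ?_, ?_, ?_⟩, ?_⟩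
  · -- continuity of ψ₁
    intro r hr
    rcases eq_or_lt_of_le (show (0:ℝ) ≤ r from hr) with rfl | hrpos
    · -- at zero
      show ContinuousWithinAt _ _ _
      rw [ContinuousWithinAt, Metric.tendsto_nhdsWithin_nhds]
      intro ε hε
      refine ⟨min ε 1, by positivity, ?_⟩
      intro t ht hd
      show dist (cf t * g₁ t) (cf 0 * g₁ 0) < ε
      rw [Real.dist_eq, sub_zero, abs_of_nonneg (show (0:ℝ) ≤ t from ht)] at hd
      have ht0 : (0:ℝ) ≤ t := ht
      have h1 : cf t * g₁ t ≤ g₁ t :=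
        mul_le_of_le_one_left (hg₁_nonneg t ht0) (hcf_bounds t ht0).2
      have h2 : 0 ≤ cf t * g₁ t :=
        mul_nonneg (le_trans (by norm_num) (hcf_bounds t ht0).1) (hg₁_nonneg t ht0)
      have h3 : g₁ t ≤ t := le_trans (hg₁_le t ht0) (min_le_right _ _)
      rw [Real.dist_eq]
      have h4 : cf 0 * g₁ 0 = 0 := by rw [hg₁_zero]; ring
      rw [h4, sub_zero, abs_of_nonneg h2]
      calc cf t * g₁ t ≤ t := le_trans h1 h3
        _ < min ε 1 := hd
        _ ≤ ε := min_le_left _ _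
    · -- at positive points
      apply ContinuousAt.continuousWithinAt
      apply ContinuousAt.mul
      · apply ContinuousAt.sub continuousAt_const
        apply ContinuousAt.div continuousAt_const (by fun_prop)
        intro h; linarith
      · have := avg_contAt habar_mono (1/2 : ℝ) 1 hrpos
        exact (continuousAt_const.mul this : )
  · -- strict monotonicity of ψ₁
    intro r₁ h₁ r₂ h₂ h12
    have h₁0 : (0:ℝ) ≤ r₁ := h₁
    have h₂0 : (0:ℝ) ≤ r₂ := h₂
    have hr₂pos : 0 < r₂ := lt_of_le_of_lt h₁0 h12
    show cf r₁ * g₁ r₁ < cf r₂ * g₁ r₂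
    calc cf r₁ * g₁ r₁ ≤ cf r₁ * g₁ r₂ :=
          mul_le_mul_of_nonneg_left (hg₁_mono r₁ r₂ h₁0 h12.le)
            (le_trans (by norm_num) (hcf_bounds r₁ h₁0).1)
      _ < cf r₂ * g₁ r₂ :=
          mul_lt_mul_of_pos_right (hcf_strict h₁ h₂ h12) (hg₁_pos r₂ hr₂pos)
  · -- ψ₁ 0 = 0
    show cf 0 * g₁ 0 = 0
    rw [hg₁_zero]; ring
  · -- ψ₁ → ∞
    rw [tendsto_atTop]
    intro M
    obtain ⟨R, hR⟩ := eventually_atTop.1 (tendsto_atTop.1 ha_tendsto (2 * M))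
    filter_upwards [eventually_ge_atTop (max (2 * R) (max (4 * M) 0))] with r hr
    have h2R : 2 * R ≤ r := le_trans (le_max_left _ _) hr
    have h4M : 4 * M ≤ r := le_trans (le_trans (le_max_left _ _) (le_max_right _ _)) hr
    have h0 : (0:ℝ) ≤ r := le_trans (le_trans (le_max_right _ _) (le_max_right _ _)) hr
    have haM : 2 * M ≤ a (r / 2) := hR _ (by linarith)
    have habar2 : 2 * M ≤ abar (r / 2) := le_min haM (by linarith)
    have hgM : 2 * M ≤ g₁ r := le_trans habar2 (hg₁_ge r h0)
    have hcfhalf := (hcf_bounds r h0).1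
    have hmul : (1/2) * g₁ r ≤ cf r * g₁ r :=
      mul_le_mul_of_nonneg_right hcfhalf (hg₁_nonneg r h0)
    show M ≤ cf r * g₁ r
    calc M ≤ (1/2) * g₁ r := by linarith
      _ ≤ cf r * g₁ r := hmul
  · -- continuity of ψ₂
    intro r hr
    rcases eq_or_lt_of_le (show (0:ℝ) ≤ r from hr) with rfl | hrpos
    · show ContinuousWithinAt _ _ _
      rw [ContinuousWithinAt, Metric.tendsto_nhdsWithin_nhds]
      intro ε hε
      obtain ⟨δ, hδ, hbδ⟩ := hb_small (ε / 2) (by positivity)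
      refine ⟨min (δ / 2) (ε / 2), by positivity, ?_⟩
      intro t ht hd
      show dist (t + g₂ t) ((0:ℝ) + g₂ 0) < ε
      have ht0 : (0:ℝ) ≤ t := ht
      rw [Real.dist_eq, sub_zero, abs_of_nonneg ht0] at hd
      have h1 : g₂ t ≤ b (2 * t) := hg₂_le t ht0
      have h2 : b (2 * t) ≤ b δ := by
        apply hb_mono
        have := lt_of_lt_of_le hd (min_le_left _ _)
        linarith
      have htε : t < ε / 2 := lt_of_lt_of_le hd (min_le_right _ _)
      rw [Real.dist_eq]
      have h3 : (0:ℝ) + g₂ 0 = 0 := by rw [hg₂_zero]; ring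
      rw [h3, sub_zero, abs_of_nonneg (by linarith [hg₂_nonneg t ht0])]
      linarith
    · apply ContinuousAt.continuousWithinAt
      exact continuousAt_id.add (avg_contAt hb_mono 1 2 hrpos)
  · -- strict monotonicity of ψ₂
    intro r₁ h₁ r₂ h₂ h12
    have : g₂ r₁ ≤ g₂ r₂ := hg₂_mono r₁ r₂ h₁ h12.le
    show r₁ + g₂ r₁ < r₂ + g₂ r₂
    exact add_lt_add_of_lt_of_le h12 this
  · -- ψ₂ 0 = 0
    show (0:ℝ) + g₂ 0 = 0
    rw [hg₂_zero]; ring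
  · -- ψ₂ → ∞
    apply tendsto_atTop_mono' atTop _ tendsto_id
    filter_upwards [eventually_ge_atTop (0:ℝ)] with r hr
    have := hg₂_nonneg r hr
    show r ≤ r + g₂ r
    linarith
  · -- the sandwich
    intro x
    set dx := Metric.infDist x S with hdx
    have hdx0 : 0 ≤ dx := Metric.infDist_nonneg
    constructor
    · have h1 : cf dx * g₁ dx ≤ g₁ dx :=
        mul_le_of_le_one_left (hg₁_nonneg dx hdx0) (hcf_bounds dx hdx0).2
      calc cf dx * g₁ dx ≤ g₁ dx := h1
        _ ≤ abar dx := hg₁_le dx hdx0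
        _ ≤ a dx := min_le_left _ _
        _ ≤ V x := ha_le dx x le_rfl
    · calc V x ≤ b dx := hVle_b x
        _ ≤ g₂ dx := hg₂_ge dx hdx0
        _ ≤ dx + g₂ dx := by linarith
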